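/- The join X * Y of two finite simplicial complexes X and Y is strongly collapsible if and only if X is strongly collapsible or Y is strongly collapsible. -/
import Mathlib


open Finset

attribute [local instance] Classical.propDecidable

noncomputable section

universe u v

/-- A finite abstract simplicial complex: a finite collection of nonempty finite sets
closed under taking nonempty subsets. -/
def IsComplex {V : Type u} (X : Finset (Finset V)) : Prop :=
  (∀ s ∈ X, s.Nonempty) ∧ ∀ s ∈ X, ∀ t : Finset V, t ⊆ s → t.Nonempty → t ∈ X

/-- `s` is a maximal simplex (facet) of `X`. -/
def IsFacet {V : Type u} (X : Finset (Finset V)) (s : Finset V) : Prop :=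
  s ∈ X ∧ ∀ t ∈ X, s ⊆ t → t = s

/-- An elementary collapse: `σ` is a free face of `X` whose unique maximal coface is `τ`,
and `Y` results from removing all simplices containing `σ`. -/
def ElemCollapse {V : Type u} (X Y : Finset (Finset V)) : Prop :=
  ∃ σ τ : Finset V, σ ∈ X ∧ IsFacet X τ ∧ σ ⊂ τ ∧
    (∀ t ∈ X, σ ⊆ t → t ⊆ τ) ∧ Y = X.filter (fun s => ¬ σ ⊆ s)

/-- `X` simplicially collapses onto `Y`. -/
def Collapses {V : Type u} (X Y : Finset (Finset V)) : Prop :=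
  Relation.ReflTransGen ElemCollapse X Y

/-- `X` is collapsible: it collapses to a single vertex. -/
def Collapsible {V : Type u} (X : Finset (Finset V)) : Prop :=
  ∃ v : V, Collapses X {{v}}

/-- The vertex `v` is dominated by the vertex `w ≠ v`: every facet containing `v`
contains `w`. -/
def Dominated {V : Type u} (X : Finset (Finset V)) (v w : V) : Prop :=
  w ≠ v ∧ ∀ s : Finset V, IsFacet X s → v ∈ s → w ∈ s

/-- An elementary strong collapse: deletion of a dominated vertex. -/
def ElemStrongCollapse {V : Type u} (X Y : Finset (Finset V)) : Prop :=
  ∃ v w : V, {v} ∈ X ∧ Dominated X v w ∧ Y = X.filter (fun s => v ∉ s)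

/-- `X` strongly collapses onto `Y`. -/
def StrongCollapses {V : Type u} (X Y : Finset (Finset V)) : Prop :=
  Relation.ReflTransGen ElemStrongCollapse X Y

/-- `X` is strongly collapsible: it strongly collapses to a single vertex. -/
def StrongCollapsible {V : Type u} (X : Finset (Finset V)) : Prop :=
  ∃ v : V, StrongCollapses X {{v}}

/-- The set of vertices of a complex. -/
def vertexSet {V : Type u} (X : Finset (Finset V)) : Finset V := X.sup id

/-- The link of a simplex `σ` in `X`. -/
def linkC {V : Type u} (X : Finset (Finset V)) (σ : Finset V) : Finset (Finset V) :=
  X.filter (fun η => Disjoint η σ ∧ η ∪ σ ∈ X)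

/-- The face-deletion of `σ` in `X`. -/
def faceDeletion {V : Type u} (X : Finset (Finset V)) (σ : Finset V) : Finset (Finset V) :=
  X.filter (fun η => ¬ σ ⊆ η)

/-- The simplicial join of two complexes (on disjoint vertex sets, via `Sum`). -/
def joinC {A : Type u} {B : Type v} (X : Finset (Finset A)) (Y : Finset (Finset B)) :
    Finset (Finset (A ⊕ B)) :=
  (((insert (∅ : Finset A) X) ×ˢ (insert (∅ : Finset B) Y)).image
      (fun p => p.1.image Sum.inl ∪ p.2.image Sum.inr)).filter (·.Nonempty)

/-- The flag (clique) complex on the admissible vertices (those satisfying `P`) of a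
finite type, with respect to a (reflexive, symmetric) compatibility relation `R`:
simplices are the nonempty finite sets of admissible vertices that are pairwise
compatible. -/
def cliqueComplex {A : Type u} [Fintype A] (P : A → Prop) (R : A → A → Prop) :
    Finset (Finset A) :=
  Finset.univ.filter (fun s : Finset A =>
    s.Nonempty ∧ (∀ a ∈ s, P a) ∧ ∀ a ∈ s, ∀ b ∈ s, R a b)

/-- A complex is a cone if some vertex lies in every maximal simplex. -/
def IsCone {A : Type u} (X : Finset (Finset A)) : Prop :=
  ∃ v : A, {v} ∈ X ∧ ∀ s, IsFacet X s → v ∈ s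

/-- Simplicial isomorphism (onto): `Y` is the image of `X` under an injection of
vertices. -/
def Isom {A : Type u} {B : Type v} (X : Finset (Finset A)) (Y : Finset (Finset B)) : Prop :=
  ∃ f : A → B, Function.Injective f ∧ Y = X.image (fun s => s.image f)

section Aux

variable {V : Type u}

lemma exists_facet_superset {X : Finset (Finset V)} {s : Finset V} (hs : s ∈ X) :
    ∃ t, IsFacet X t ∧ s ⊆ t := by
  classical
  obtain ⟨t, ht, hmax⟩ := Finset.exists_max_image (X.filter (fun t => s ⊆ t)) Finset.card
    ⟨s, by simp [hs]⟩
  simp only [mem_filter] at ht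
  refine ⟨t, ⟨ht.1, fun u hu htu => ?_⟩, ht.2⟩
  have : u ∈ X.filter (fun t => s ⊆ t) := by simp [hu, ht.2.trans htu]
  exact (Finset.eq_of_subset_of_card_le htu (hmax u this)).symm

lemma singleton_mem {X : Finset (Finset V)} (hX : IsComplex X) {s : Finset V} (hs : s ∈ X)
    {a : V} (ha : a ∈ s) : ({a} : Finset V) ∈ X :=
  hX.2 s hs {a} (by simpa) ⟨a, by simp⟩

lemma isComplex_filter_not_mem {X : Finset (Finset V)} (hX : IsComplex X) (v : V) :
    IsComplex (X.filter (fun s => v ∉ s)) := by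
  constructor
  · intro s hs; exact hX.1 s (Finset.mem_filter.1 hs).1
  · intro s hs t hts htne
    simp only [Finset.mem_filter] at hs ⊢
    exact ⟨hX.2 s hs.1 t hts htne, fun h => hs.2 (hts h)⟩

end Aux

section JoinAux

variable {A : Type u} {B : Type v} {X : Finset (Finset A)} {Y : Finset (Finset B)}

lemma toLeft_decomp {σ : Finset A} {η : Finset B} :
    (σ.image Sum.inl ∪ η.image Sum.inr : Finset (A ⊕ B)).toLeft = σ ∧
    (σ.image Sum.inl ∪ η.image Sum.inr : Finset (A ⊕ B)).toRight = η := by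
  constructor <;> ext x <;> simp

lemma decomp_eq (s : Finset (A ⊕ B)) :
    s.toLeft.image Sum.inl ∪ s.toRight.image Sum.inr = s := by
  ext x; cases x <;> simp

lemma mem_joinC {s : Finset (A ⊕ B)} :
    s ∈ joinC X Y ↔ s.Nonempty ∧ (s.toLeft = ∅ ∨ s.toLeft ∈ X) ∧
      (s.toRight = ∅ ∨ s.toRight ∈ Y) := by
  unfold joinC
  simp only [Finset.mem_filter, Finset.mem_image, Finset.mem_product, Prod.exists]
  constructor
  · rintro ⟨⟨σ, η, ⟨hσ, hη⟩, rfl⟩, hne⟩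
    rw [toLeft_decomp.1, toLeft_decomp.2]
    simp only [Finset.mem_insert] at hσ hη
    exact ⟨hne, hσ, hη⟩
  · rintro ⟨hne, hσ, hη⟩
    exact ⟨⟨s.toLeft, s.toRight, ⟨by simpa using hσ, by simpa using hη⟩, decomp_eq s⟩, hne⟩

lemma isComplex_joinC (hX : IsComplex X) (hY : IsComplex Y) : IsComplex (joinC X Y) := by
  constructor
  · intro s hs; exact (mem_joinC.1 hs).1
  · intro s hs t hts htne
    obtain ⟨-, hL, hR⟩ := mem_joinC.1 hs
    refine mem_joinC.2 ⟨htne, ?_, ?_⟩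
    · rcases Finset.eq_empty_or_nonempty t.toLeft with h | h
      · exact Or.inl h
      · right
        rcases hL with h0 | hL
        · have h1 := Finset.toLeft_subset_toLeft hts
          rw [h0] at h1
          exact absurd (Finset.subset_empty.1 h1) h.ne_empty
        · exact hX.2 _ hL _ (Finset.toLeft_subset_toLeft hts) h
    · rcases Finset.eq_empty_or_nonempty t.toRight with h | h
      · exact Or.inl h
      · right
        rcases hR with h0 | hR
        · have h1 := Finset.toRight_subset_toRight hts
          rw [h0] at h1
          exact absurd (Finset.subset_empty.1 h1) h.ne_empty
        · exact hY.2 _ hR _ (Finset.toRight_subset_toRight hts) h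

lemma singleton_inl_mem {a : A} :
    ({Sum.inl a} : Finset (A ⊕ B)) ∈ joinC X Y ↔ ({a} : Finset A) ∈ X := by
  have h1 : ({Sum.inl a} : Finset (A ⊕ B)).toLeft = {a} := by ext x; simp
  have h2 : ({Sum.inl a} : Finset (A ⊕ B)).toRight = ∅ := by ext x; simp
  rw [mem_joinC, h1, h2]
  simp [Finset.singleton_ne_empty]

lemma singleton_inr_mem {b : B} :
    ({Sum.inr b} : Finset (A ⊕ B)) ∈ joinC X Y ↔ ({b} : Finset B) ∈ Y := by
  have h1 : ({Sum.inr b} : Finset (A ⊕ B)).toLeft = ∅ := by ext x; simp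
  have h2 : ({Sum.inr b} : Finset (A ⊕ B)).toRight = {b} := by ext x; simp
  rw [mem_joinC, h1, h2]
  simp [Finset.singleton_ne_empty]

lemma isFacet_joinC (hX : IsComplex X) (hY : IsComplex Y) (hXne : X.Nonempty)
    (hYne : Y.Nonempty) {s : Finset (A ⊕ B)} :
    IsFacet (joinC X Y) s ↔ IsFacet X s.toLeft ∧ IsFacet Y s.toRight := by
  constructor
  · rintro ⟨hs, hmax⟩
    obtain ⟨hne, hL, hR⟩ := mem_joinC.1 hs
    have hσ1 : ∃ σ1, σ1 ∈ X ∧ s.toLeft ⊆ σ1 := by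
      rcases hL with h0 | hL
      · obtain ⟨σ, hσ⟩ := id hXne; exact ⟨σ, hσ, by simp [h0]⟩
      · exact ⟨_, hL, subset_rfl⟩
    have hη1 : ∃ η1, η1 ∈ Y ∧ s.toRight ⊆ η1 := by
      rcases hR with h0 | hR
      · obtain ⟨η, hη⟩ := id hYne; exact ⟨η, hη, by simp [h0]⟩
      · exact ⟨_, hR, subset_rfl⟩
    obtain ⟨σ1, hσ1X, hσ1s⟩ := hσ1
    obtain ⟨η1, hη1Y, hη1s⟩ := hη1
    obtain ⟨σF, hσF, hσsub⟩ := exists_facet_superset hσ1X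
    obtain ⟨ηF, hηF, hηsub⟩ := exists_facet_superset hη1Y
    set t : Finset (A ⊕ B) := σF.image Sum.inl ∪ ηF.image Sum.inr with ht_def
    have htmem : t ∈ joinC X Y := by
      refine mem_joinC.2 ⟨?_, ?_, ?_⟩
      · obtain ⟨x, hx⟩ := hX.1 _ hσF.1
        exact ⟨Sum.inl x, by simp [ht_def, hx]⟩
      · rw [toLeft_decomp.1]; exact Or.inr hσF.1
      · rw [toLeft_decomp.2]; exact Or.inr hηF.1
    have hst : s ⊆ t := by
      conv_lhs => rw [← decomp_eq s]
      apply Finset.union_subset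
      · exact (Finset.image_subset_image (hσ1s.trans hσsub)).trans Finset.subset_union_left
      · exact (Finset.image_subset_image (hη1s.trans hηsub)).trans Finset.subset_union_right
    have hts : t = s := hmax t htmem hst
    constructor
    · rw [← hts, toLeft_decomp.1]; exact hσF
    · rw [← hts, toLeft_decomp.2]; exact hηF
  · rintro ⟨hLf, hRf⟩
    have hsLne : s.toLeft.Nonempty := hX.1 _ hLf.1
    have hsmem : s ∈ joinC X Y := by
      refine mem_joinC.2 ⟨?_, Or.inr hLf.1, Or.inr hRf.1⟩
      obtain ⟨x, hx⟩ := hsLne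
      exact ⟨Sum.inl x, Finset.mem_toLeft.1 hx⟩
    refine ⟨hsmem, fun u hu hsu => ?_⟩
    obtain ⟨hune, huL, huR⟩ := mem_joinC.1 hu
    have h1 : s.toLeft ⊆ u.toLeft := Finset.toLeft_subset_toLeft hsu
    have h2 : s.toRight ⊆ u.toRight := Finset.toRight_subset_toRight hsu
    have huLX : u.toLeft ∈ X := by
      rcases huL with h0 | h
      · rw [h0] at h1
        exact absurd (Finset.subset_empty.1 h1) hsLne.ne_empty
      · exact h
    have hLeq : u.toLeft = s.toLeft := hLf.2 _ huLX h1
    have huRY : u.toRight = s.toRight := by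
      rcases huR with h0 | h
      · rw [h0] at h2
        rw [h0, Finset.subset_empty.1 h2]
      · exact hRf.2 _ h h2
    rw [← decomp_eq u, ← decomp_eq s, hLeq, huRY]

lemma filter_joinC_inl (a : A) :
    (joinC X Y).filter (fun s => Sum.inl a ∉ s) = joinC (X.filter (fun s => a ∉ s)) Y := by
  ext s
  have hmem : Sum.inl a ∈ s ↔ a ∈ s.toLeft := by simp
  simp only [Finset.mem_filter, mem_joinC]
  constructor
  · rintro ⟨⟨hne, hL, hR⟩, hna⟩
    refine ⟨hne, ?_, hR⟩
    rcases hL with h | h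
    · exact Or.inl h
    · exact Or.inr ⟨h, fun hc => hna (hmem.2 hc)⟩
  · rintro ⟨hne, hL, hR⟩
    refine ⟨⟨hne, ?_, hR⟩, ?_⟩
    · rcases hL with h | h
      · exact Or.inl h
      · exact Or.inr h.1
    · intro hc
      rcases hL with h | h
      · exact absurd h (Finset.ne_empty_of_mem (hmem.1 hc))
      · exact h.2 (hmem.1 hc)

lemma filter_joinC_inr (b : B) :
    (joinC X Y).filter (fun s => Sum.inr b ∉ s) = joinC X (Y.filter (fun s => b ∉ s)) := by
  ext s
  have hmem : Sum.inr b ∈ s ↔ b ∈ s.toRight := by simp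
  simp only [Finset.mem_filter, mem_joinC]
  constructor
  · rintro ⟨⟨hne, hL, hR⟩, hnb⟩
    refine ⟨hne, hL, ?_⟩
    rcases hR with h | h
    · exact Or.inl h
    · exact Or.inr ⟨h, fun hc => hnb (hmem.2 hc)⟩
  · rintro ⟨hne, hL, hR⟩
    refine ⟨⟨hne, hL, ?_⟩, ?_⟩
    · rcases hR with h | h
      · exact Or.inl h
      · exact Or.inr h.1
    · intro hc
      rcases hR with h | h
      · exact absurd h (Finset.ne_empty_of_mem (hmem.1 hc))
      · exact h.2 (hmem.1 hc)

lemma dominated_inl_inl (hX : IsComplex X) (hY : IsComplex Y) (hXne : X.Nonempty)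
    (hYne : Y.Nonempty) {a b : A} :
    Dominated (joinC X Y) (Sum.inl a) (Sum.inl b) ↔ Dominated X a b := by
  constructor
  · rintro ⟨hne, hdom⟩
    refine ⟨fun h => hne (by rw [h]), fun F hF haF => ?_⟩
    obtain ⟨η, hη⟩ := id hYne
    obtain ⟨ηF, hηF, -⟩ := exists_facet_superset hη
    set t : Finset (A ⊕ B) := F.image Sum.inl ∪ ηF.image Sum.inr with ht_def
    have htf : IsFacet (joinC X Y) t := by
      rw [isFacet_joinC hX hY hXne hYne, toLeft_decomp.1, toLeft_decomp.2]
      exact ⟨hF, hηF⟩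
    have := hdom t htf (by simp [ht_def, haF])
    simpa [ht_def] using this
  · rintro ⟨hne, hdom⟩
    refine ⟨fun h => hne (Sum.inl.inj h), fun F hF haF => ?_⟩
    obtain ⟨hLf, hRf⟩ := (isFacet_joinC hX hY hXne hYne).1 hF
    have ha' : a ∈ F.toLeft := by simpa using haF
    have := hdom _ hLf ha'
    exact Finset.mem_toLeft.1 this

lemma dominated_inr_inr (hX : IsComplex X) (hY : IsComplex Y) (hXne : X.Nonempty)
    (hYne : Y.Nonempty) {a b : B} :
    Dominated (joinC X Y) (Sum.inr a) (Sum.inr b) ↔ Dominated Y a b := by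
  constructor
  · rintro ⟨hne, hdom⟩
    refine ⟨fun h => hne (by rw [h]), fun F hF haF => ?_⟩
    obtain ⟨σ, hσ⟩ := id hXne
    obtain ⟨σF, hσF, -⟩ := exists_facet_superset hσ
    set t : Finset (A ⊕ B) := σF.image Sum.inl ∪ F.image Sum.inr with ht_def
    have htf : IsFacet (joinC X Y) t := by
      rw [isFacet_joinC hX hY hXne hYne, toLeft_decomp.1, toLeft_decomp.2]
      exact ⟨hσF, hF⟩
    have := hdom t htf (by simp [ht_def, haF])
    simpa [ht_def] using this
  · rintro ⟨hne, hdom⟩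
    refine ⟨fun h => hne (Sum.inr.inj h), fun F hF haF => ?_⟩
    obtain ⟨hLf, hRf⟩ := (isFacet_joinC hX hY hXne hYne).1 hF
    have ha' : a ∈ F.toRight := by simpa using haF
    have := hdom _ hRf ha'
    exact Finset.mem_toRight.1 this

lemma dominated_inl_inr (hX : IsComplex X) (hY : IsComplex Y) (hXne : X.Nonempty)
    (hYne : Y.Nonempty) {a : A} {b : B} (ha : ({a} : Finset A) ∈ X)
    (h : Dominated (joinC X Y) (Sum.inl a) (Sum.inr b)) :
    ∀ t, IsFacet Y t → b ∈ t := by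
  intro t ht
  obtain ⟨σF, hσF, haσ⟩ := exists_facet_superset ha
  set u : Finset (A ⊕ B) := σF.image Sum.inl ∪ t.image Sum.inr with hu_def
  have huf : IsFacet (joinC X Y) u := by
    rw [isFacet_joinC hX hY hXne hYne, toLeft_decomp.1, toLeft_decomp.2]
    exact ⟨hσF, ht⟩
  have hau : Sum.inl a ∈ u := by
    simp [hu_def, Finset.singleton_subset_iff.1 haσ]
  have := h.2 u huf hau
  simpa [hu_def] using this

lemma dominated_inr_inl (hX : IsComplex X) (hY : IsComplex Y) (hXne : X.Nonempty)
    (hYne : Y.Nonempty) {b : B} {a : A} (hb : ({b} : Finset B) ∈ Y)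
    (h : Dominated (joinC X Y) (Sum.inr b) (Sum.inl a)) :
    ∀ t, IsFacet X t → a ∈ t := by
  intro t ht
  obtain ⟨ηF, hηF, hbη⟩ := exists_facet_superset hb
  set u : Finset (A ⊕ B) := t.image Sum.inl ∪ ηF.image Sum.inr with hu_def
  have huf : IsFacet (joinC X Y) u := by
    rw [isFacet_joinC hX hY hXne hYne, toLeft_decomp.1, toLeft_decomp.2]
    exact ⟨ht, hηF⟩
  have hbu : Sum.inr b ∈ u := by
    simp [hu_def, Finset.singleton_subset_iff.1 hbη]
  have := h.2 u huf hbu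
  simpa [hu_def] using this

end JoinAux

lemma filter_irrel {α : Type*} {p : α → Prop} {h1 : DecidablePred p} [h2 : DecidablePred p]
    (s : Finset α) : @Finset.filter α p h1 s = @Finset.filter α p h2 s :=
  Finset.ext fun x => by
    rw [@Finset.mem_filter _ _ h1, @Finset.mem_filter _ _ h2]

section ConeAux

variable {V : Type u}

lemma isComplex_point (v : V) : IsComplex ({({v} : Finset V)} : Finset (Finset V)) := by
  constructor
  · intro s hs; rw [Finset.mem_singleton] at hs; subst hs; simp
  · intro s hs t hts htne
    rw [Finset.mem_singleton] at hs ⊢; subst hs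
    exact (Finset.subset_singleton_iff.1 hts).resolve_left htne.ne_empty

lemma cone_strongCollapsible_aux :
    ∀ n : ℕ, ∀ Y : Finset (Finset V), Y.card ≤ n → IsComplex Y → IsCone Y →
      StrongCollapsible Y := by
  intro n
  induction n with
  | zero =>
    rintro Y hcard hY ⟨v, hv, -⟩
    exact absurd (Finset.card_pos.2 ⟨_, hv⟩) (by omega)
  | succ n ih =>
    rintro Y hcard hY ⟨v, hv, hcone⟩
    by_cases hall : ∀ s ∈ Y, s = {v}
    · have hYeq : Y = {{v}} := by
        ext s; simp only [Finset.mem_singleton]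
        exact ⟨fun h => hall s h, fun h => h ▸ hv⟩
      exact ⟨v, hYeq ▸ Relation.ReflTransGen.refl⟩
    · push_neg at hall
      obtain ⟨s, hsY, hsne⟩ := hall
      have hsne' := hY.1 s hsY
      have hex : ∃ u ∈ s, u ≠ v := by
        by_contra h
        push_neg at h
        have hsub : s ⊆ {v} := fun x hx => by simp [h x hx]
        rcases Finset.subset_singleton_iff.1 hsub with h0 | h0
        · exact hsne'.ne_empty h0
        · exact hsne h0
      obtain ⟨u, hus, huv⟩ := hex
      have hu : ({u} : Finset V) ∈ Y := singleton_mem hY hsY hus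
      have hdom : Dominated Y u v := ⟨Ne.symm huv, fun F hF _ => hcone F hF⟩
      set Y' := Y.filter (fun s => u ∉ s) with hY'
      have hstep : ElemStrongCollapse Y Y' := ⟨u, v, hu, hdom, hY'⟩
      have hY'c : IsComplex Y' := isComplex_filter_not_mem hY u
      have hvY' : ({v} : Finset V) ∈ Y' := by
        rw [hY', Finset.mem_filter]
        exact ⟨hv, by simp [huv]⟩
      have hcone' : IsCone Y' := by
        refine ⟨v, hvY', fun t ht => ?_⟩
        have htY : t ∈ Y := (Finset.mem_filter.1 ht.1).1
        obtain ⟨F, hF, htF⟩ := exists_facet_superset htY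
        have hvF : v ∈ F := hcone F hF
        have h1 : t ∪ {v} ∈ Y :=
          hY.2 F hF.1 _ (Finset.union_subset htF (by simpa)) ⟨v, by simp⟩
        have h2 : t ∪ {v} ∈ Y' := by
          rw [hY', Finset.mem_filter]
          refine ⟨h1, ?_⟩
          simp only [Finset.mem_union, Finset.mem_singleton]
          rintro (h | h)
          · exact (Finset.mem_filter.1 ht.1).2 h
          · exact huv h
        have := ht.2 _ h2 Finset.subset_union_left
        rw [← this]; simp
      have hlt : Y'.card < Y.card :=
        Finset.card_lt_card (Finset.filter_ssubset.2 ⟨{u}, hu, by simp⟩)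
      obtain ⟨z, hz⟩ := ih Y' (by omega) hY'c hcone'
      exact ⟨z, Relation.ReflTransGen.head hstep hz⟩

lemma cone_strongCollapsible {Y : Finset (Finset V)} (hY : IsComplex Y) (h : IsCone Y) :
    StrongCollapsible Y :=
  cone_strongCollapsible_aux Y.card Y le_rfl hY h

lemma elemStrongCollapse_invariant {X X' : Finset (Finset V)} (h : ElemStrongCollapse X X')
    (hX : IsComplex X) : IsComplex X' ∧ (∃ w, ({w} : Finset V) ∈ X') ∧ X'.card < X.card := by
  obtain ⟨v, w, hv, hdom, rfl⟩ := h
  refine ⟨isComplex_filter_not_mem hX v, ?_, ?_⟩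
  · obtain ⟨F, hF, hvF⟩ := exists_facet_superset hv
    have hwF := hdom.2 F hF (Finset.singleton_subset_iff.1 hvF)
    refine ⟨w, ?_⟩
    simp only [Finset.mem_filter, Finset.mem_singleton]
    exact ⟨singleton_mem hX hF.1 hwF, fun hh => hdom.1 hh.symm⟩
  · exact Finset.card_lt_card (Finset.filter_ssubset.2 ⟨{v}, hv, by simp⟩)

lemma strongCollapses_invariant {X X' : Finset (Finset V)} (h : StrongCollapses X X')
    (hX : IsComplex X) : IsComplex X' := by
  induction h with
  | refl => exact hX
  | tail _ hbc ih => exact (elemStrongCollapse_invariant hbc ih).1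

end ConeAux

section LiftAux

variable {A : Type u} {B : Type v} {X X' Z : Finset (Finset A)} {Y Y' W : Finset (Finset B)}

lemma elem_lift_inl (hX : IsComplex X) (hY : IsComplex Y) (hXne : X.Nonempty)
    (hYne : Y.Nonempty) (h : ElemStrongCollapse X X') :
    ElemStrongCollapse (joinC X Y) (joinC X' Y) := by
  obtain ⟨v, w, hv, hdom, rfl⟩ := h
  refine ⟨Sum.inl v, Sum.inl w, singleton_inl_mem.2 hv,
    (dominated_inl_inl hX hY hXne hYne).2 hdom, ?_⟩
  rw [filter_irrel (joinC X Y)]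
  exact (filter_joinC_inl v).symm

lemma elem_lift_inr (hX : IsComplex X) (hY : IsComplex Y) (hXne : X.Nonempty)
    (hYne : Y.Nonempty) (h : ElemStrongCollapse Y Y') :
    ElemStrongCollapse (joinC X Y) (joinC X Y') := by
  obtain ⟨v, w, hv, hdom, rfl⟩ := h
  refine ⟨Sum.inr v, Sum.inr w, singleton_inr_mem.2 hv,
    (dominated_inr_inr hX hY hXne hYne).2 hdom, ?_⟩
  rw [filter_irrel (joinC X Y)]
  exact (filter_joinC_inr v).symm

lemma collapses_lift_inl (hX : IsComplex X) (hY : IsComplex Y) (hXne : X.Nonempty)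
    (hYne : Y.Nonempty) (h : StrongCollapses X Z) :
    StrongCollapses (joinC X Y) (joinC Z Y) := by
  induction h with
  | refl => exact Relation.ReflTransGen.refl
  | @tail b c hab hbc ih =>
    have hb : IsComplex b := strongCollapses_invariant hab hX
    have hbne : b.Nonempty := by obtain ⟨v, w, hv, -, -⟩ := hbc; exact ⟨_, hv⟩
    exact ih.tail (elem_lift_inl hb hY hbne hYne hbc)

lemma collapses_lift_inr (hX : IsComplex X) (hY : IsComplex Y) (hXne : X.Nonempty)
    (hYne : Y.Nonempty) (h : StrongCollapses Y W) :
    StrongCollapses (joinC X Y) (joinC X W) := by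
  induction h with
  | refl => exact Relation.ReflTransGen.refl
  | @tail b c hab hbc ih =>
    have hb : IsComplex b := strongCollapses_invariant hab hY
    have hbne : b.Nonempty := by obtain ⟨v, w, hv, -, -⟩ := hbc; exact ⟨_, hv⟩
    exact ih.tail (elem_lift_inr hX hb hXne hbne hbc)

lemma isCone_joinC_left {v : A} (hY : IsComplex Y) (hYne : Y.Nonempty) :
    IsCone (joinC ({({v} : Finset A)} : Finset (Finset A)) Y) := by
  refine ⟨Sum.inl v, singleton_inl_mem.2 (by simp), fun s hs => ?_⟩
  obtain ⟨hLf, -⟩ := (isFacet_joinC (isComplex_point v) hY (by simp) hYne).1 hs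
  have h1 : s.toLeft = {v} := by simpa using hLf.1
  have h2 : v ∈ s.toLeft := by rw [h1]; simp
  exact Finset.mem_toLeft.1 h2

lemma isCone_joinC_right {w : B} (hX : IsComplex X) (hXne : X.Nonempty) :
    IsCone (joinC X ({({w} : Finset B)} : Finset (Finset B))) := by
  refine ⟨Sum.inr w, singleton_inr_mem.2 (by simp), fun s hs => ?_⟩
  obtain ⟨-, hRf⟩ := (isFacet_joinC hX (isComplex_point w) hXne (by simp)).1 hs
  have h1 : s.toRight = {w} := by simpa using hRf.1
  have h2 : w ∈ s.toRight := by rw [h1]; simp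
  exact Finset.mem_toRight.1 h2

lemma main_aux :
    ∀ n : ℕ, ∀ (X : Finset (Finset A)) (Y : Finset (Finset B)),
      X.card + Y.card ≤ n → IsComplex X → IsComplex Y → X.Nonempty → Y.Nonempty →
      StrongCollapsible (joinC X Y) → StrongCollapsible X ∨ StrongCollapsible Y := by
  intro n
  induction n with
  | zero =>
    intro X Y hc hX hY hXne hYne _
    have := Finset.card_pos.2 hXne
    omega
  | succ n ih =>
    rintro X Y hc hX hY hXne hYne ⟨z, hcoll⟩
    obtain ⟨sX, hsX⟩ := id hXne
    obtain ⟨sY, hsY⟩ := id hYne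
    obtain ⟨aX, haX⟩ := hX.1 sX hsX
    obtain ⟨aY, haY⟩ := hY.1 sY hsY
    have hpair : ({Sum.inl aX, Sum.inr aY} : Finset (A ⊕ B)) ∈ joinC X Y := by
      refine mem_joinC.2 ⟨⟨_, Finset.mem_insert_self _ _⟩, ?_, ?_⟩
      · right
        have hL : ({Sum.inl aX, Sum.inr aY} : Finset (A ⊕ B)).toLeft = {aX} := by
          ext x; simp
        rw [hL]
        exact singleton_mem hX hsX haX
      · right
        have hR : ({Sum.inl aX, Sum.inr aY} : Finset (A ⊕ B)).toRight = {aY} := by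
          ext x; simp
        rw [hR]
        exact singleton_mem hY hsY haY
    have hne_single : joinC X Y ≠ {{z}} := by
      intro h
      rw [h, Finset.mem_singleton] at hpair
      have h1 : Sum.inl aX ∈ ({z} : Finset (A ⊕ B)) := hpair ▸ Finset.mem_insert_self _ _
      have h2 : Sum.inr aY ∈ ({z} : Finset (A ⊕ B)) := by
        rw [← hpair]; simp
      rw [Finset.mem_singleton] at h1 h2
      rw [← h1] at h2
      exact Sum.inl_ne_inr h2.symm
    rcases Relation.ReflTransGen.cases_head hcoll with h | ⟨J, hstep, hcoll'⟩
    · exact absurd h hne_single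
    obtain ⟨v, w, hvJ, hdom, hJ⟩ := hstep
    rcases v with a | b
    · rcases w with b | b'
      · -- inl dominated by inl : recurse on X
        have haX' : ({a} : Finset A) ∈ X := singleton_inl_mem.1 hvJ
        have hdomX : Dominated X a b := (dominated_inl_inl hX hY hXne hYne).1 hdom
        set X' := X.filter (fun s => a ∉ s) with hX'def
        have hJ' : J = joinC X' Y := by
          rw [hJ, filter_irrel (joinC X Y), filter_joinC_inl]
        have hX'c := isComplex_filter_not_mem hX a
        have hbne : b ≠ a := hdomX.1
        have hbX' : ({b} : Finset A) ∈ X' := by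
          obtain ⟨F, hF, haF⟩ := exists_facet_superset haX'
          have hbF := hdomX.2 F hF (by simpa using haF)
          rw [hX'def, Finset.mem_filter]
          exact ⟨singleton_mem hX hF.1 hbF, by simp [Ne.symm hbne]⟩
        have hX'ne : X'.Nonempty := ⟨_, hbX'⟩
        have hcard : X'.card < X.card :=
          Finset.card_lt_card (Finset.filter_ssubset.2 ⟨{a}, haX', by simp⟩)
        have hSC' : StrongCollapsible (joinC X' Y) := ⟨z, hJ' ▸ hcoll'⟩
        rcases ih X' Y (by omega) hX'c hY hX'ne hYne hSC' with h | h
        · left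
          obtain ⟨z', hz'⟩ := h
          exact ⟨z', Relation.ReflTransGen.head ⟨a, b, haX', hdomX, hX'def⟩ hz'⟩
        · exact Or.inr h
      · -- inl dominated by inr : Y is a cone
        have haX' : ({a} : Finset A) ∈ X := singleton_inl_mem.1 hvJ
        have hb := dominated_inl_inr hX hY hXne hYne haX' hdom
        obtain ⟨F, hF, -⟩ := exists_facet_superset hsY
        have hbY : ({b'} : Finset B) ∈ Y := singleton_mem hY hF.1 (hb F hF)
        exact Or.inr (cone_strongCollapsible hY ⟨b', hbY, hb⟩)
    · rcases w with a' | b'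
      · -- inr dominated by inl : X is a cone
        have hbY' : ({b} : Finset B) ∈ Y := singleton_inr_mem.1 hvJ
        have ha := dominated_inr_inl hX hY hXne hYne hbY' hdom
        obtain ⟨F, hF, -⟩ := exists_facet_superset hsX
        have haX2 : ({a'} : Finset A) ∈ X := singleton_mem hX hF.1 (ha F hF)
        exact Or.inl (cone_strongCollapsible hX ⟨a', haX2, ha⟩)
      · -- inr dominated by inr : recurse on Y
        have hbY' : ({b} : Finset B) ∈ Y := singleton_inr_mem.1 hvJ
        have hdomY : Dominated Y b b' := (dominated_inr_inr hX hY hXne hYne).1 hdom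
        set Y' := Y.filter (fun s => b ∉ s) with hY'def
        have hJ' : J = joinC X Y' := by
          rw [hJ, filter_irrel (joinC X Y), filter_joinC_inr]
        have hY'c := isComplex_filter_not_mem hY b
        have hbne : b' ≠ b := hdomY.1
        have hbY2 : ({b'} : Finset B) ∈ Y' := by
          obtain ⟨F, hF, hbF⟩ := exists_facet_superset hbY'
          have hb'F := hdomY.2 F hF (by simpa using hbF)
          rw [hY'def, Finset.mem_filter]
          exact ⟨singleton_mem hY hF.1 hb'F, by simp [Ne.symm hbne]⟩
        have hY'ne : Y'.Nonempty := ⟨_, hbY2⟩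
        have hcard : Y'.card < Y.card :=
          Finset.card_lt_card (Finset.filter_ssubset.2 ⟨{b}, hbY', by simp⟩)
        have hSC' : StrongCollapsible (joinC X Y') := ⟨z, hJ' ▸ hcoll'⟩
        rcases ih X Y' (by omega) hX hY'c hXne hY'ne hSC' with h | h
        · exact Or.inl h
        · right
          obtain ⟨z', hz'⟩ := h
          exact ⟨z', Relation.ReflTransGen.head ⟨b, b', hbY', hdomY, hY'def⟩ hz'⟩

end LiftAux

/-- Barmak–Minian. The join of two finite simplicial complexes is
strongly collapsible iff one of the factors is strongly collapsible. -/
theorem stmt4 {A : Type u} {B : Type v} (X : Finset (Finset A)) (Y : Finset (Finset B))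
    (hX : IsComplex X) (hY : IsComplex Y) (hXne : X.Nonempty) (hYne : Y.Nonempty) :
    StrongCollapsible (joinC X Y) ↔ StrongCollapsible X ∨ StrongCollapsible Y := by
  constructor
  · exact main_aux (X.card + Y.card) X Y le_rfl hX hY hXne hYne
  · rintro (⟨v, hcoll⟩ | ⟨v, hcoll⟩)
    · have h1 : StrongCollapses (joinC X Y) (joinC {({v} : Finset A)} Y) :=
        collapses_lift_inl hX hY hXne hYne hcoll
      obtain ⟨z, h2⟩ := cone_strongCollapsible (isComplex_joinC (isComplex_point v) hY)
        (isCone_joinC_left hY hYne)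
      exact ⟨z, h1.trans h2⟩
    · have h1 : StrongCollapses (joinC X Y) (joinC X {({v} : Finset B)}) :=
        collapses_lift_inr hX hY hXne hYne hcoll
      obtain ⟨z, h2⟩ := cone_strongCollapsible (isComplex_joinC hX (isComplex_point v))
        (isCone_joinC_right hX hXne)
      exact ⟨z, h1.trans h2⟩
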